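/- Let $m, n \in \mathbb{N}$ with $n \geq 2$, and let $k$ be a field. Let $L_k = \mathcal{L}_{m,n} \otimes_{\mathbb{Z}} k$ be the class-two nilpotent Lie algebra with basis $\{x_{\mathbf{e}} : \mathbf{e} \in \mathbf{E}\} \cup \{y_{\mathbf{f}} : \mathbf{f} \in \mathbf{F}\} \cup \{z_1, \dots, z_n\}$, where $\mathbf{E} = \{\mathbf{e} \in \mathbb{N}_0^n : \sum e_i = m-1\}$, $\mathbf{F} = \{\mathbf{f} \in \mathbb{N}_0^n : \sum f_i = m\}$, with $[x_{\mathbf{e}}, y_{\mathbf{f}}] = z_i$ if $\mathbf{f} - \mathbf{e} = \mathbf{b}_i$ (the $i$-th standard basis vector) and all other basis brackets zero, the $z_i$ central. Then for every element $v = \sum_{\mathbf{e}} a_{\mathbf{e}} x_{\mathbf{e}} + \sum_{\mathbf{f}} c_{\mathbf{f}} y_{\mathbf{f}} + \sum_i d_i z_i$ with $a_{\mathbf{e}} \neq 0$ for some $\mathbf{e}$, one has $\dim_k [v, L_k] = n$. -/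

import Mathlib

/-- in the Lie algebra `L_k = 𝓛_{m,n} ⊗ k` (basis
`{x_𝐞 : 𝐞 ∈ 𝐄} ∪ {y_𝐟 : 𝐟 ∈ 𝐅} ∪ {z₁,…,z_n}` with `[x_𝐞, y_𝐟] = z_i` when
`𝐟 - 𝐞 = 𝐛_i` and all other basis brackets zero, the `z_i` central), every
element `v` with a nonzero `x`-coordinate satisfies `dim_k [v, L_k] = n`. -/
theorem stmt8 (m n : ℕ) (hm : 1 ≤ m) (hn : 2 ≤ n) (k : Type*) [Field k]
    (L : Type*) [LieRing L] [LieAlgebra k L]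
    (b : Module.Basis (({e : Fin n → ℕ // ∑ i, e i = m - 1}) ⊕
        ({f : Fin n → ℕ // ∑ i, f i = m}) ⊕ Fin n) k L)
    (hbr : ∀ (e : {e : Fin n → ℕ // ∑ i, e i = m - 1})
        (f : {f : Fin n → ℕ // ∑ i, f i = m}) (i : Fin n),
        (∀ j, f.val j = e.val j + if j = i then 1 else 0) →
        ⁅b (Sum.inl e), b (Sum.inr (Sum.inl f))⁆ = b (Sum.inr (Sum.inr i)))
    (hbr0 : ∀ (e : {e : Fin n → ℕ // ∑ i, e i = m - 1})
        (f : {f : Fin n → ℕ // ∑ i, f i = m}),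
        (¬ ∃ i : Fin n, ∀ j, f.val j = e.val j + if j = i then 1 else 0) →
        ⁅b (Sum.inl e), b (Sum.inr (Sum.inl f))⁆ = 0)
    (hxx : ∀ e e', ⁅b (Sum.inl e), b (Sum.inl e')⁆ = 0)
    (hyy : ∀ f f', ⁅b (Sum.inr (Sum.inl f)), b (Sum.inr (Sum.inl f'))⁆ = 0)
    (hz : ∀ u (i : Fin n), ⁅b u, b (Sum.inr (Sum.inr i))⁆ = 0)
    (v : L) (hv : ∃ e, b.repr v (Sum.inl e) ≠ 0) :
    Module.finrank k
      (LinearMap.range ((LieAlgebra.ad k L v) : L →ₗ[k] L)) = n := by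
  classical
  set z : Fin n → L := fun i => b (Sum.inr (Sum.inr i)) with hzdef
  set Z : Submodule k L := Submodule.span k (Set.range z) with hZ
  have hzmem : ∀ i, z i ∈ Z := fun i => Submodule.subset_span ⟨i, rfl⟩
  have hbasis_to_all : ∀ (Z' : Submodule k L) (φ : L →ₗ[k] L),
      (∀ u, φ (b u) ∈ Z') → ∀ w, φ w ∈ Z' := by
    intro Z' φ h w
    have hw : w ∈ Submodule.span k (Set.range b) := by rw [b.span_eq]; trivial
    induction hw using Submodule.span_induction with
    | mem x hx => obtain ⟨u, rfl⟩ := hx; exact h u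
    | zero => simp
    | add x y _ _ hx hy => rw [map_add]; exact Z'.add_mem hx hy
    | smul c x _ hx => rw [map_smul]; exact Z'.smul_mem c hx
  have hxy : ∀ e f, ⁅b (Sum.inl e), b (Sum.inr (Sum.inl f))⁆ ∈ Z := by
    intro e f
    by_cases h : ∃ i : Fin n, ∀ j, f.val j = e.val j + if j = i then 1 else 0
    · obtain ⟨i, hi⟩ := h; rw [hbr e f i hi]; exact hzmem i
    · rw [hbr0 e f h]; exact Z.zero_mem
  have hbb : ∀ u u', ⁅b u, b u'⁆ ∈ Z := by
    rintro (e | f | i) (e' | f' | i')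
    · rw [hxx]; exact Z.zero_mem
    · exact hxy e f'
    · rw [hz]; exact Z.zero_mem
    · rw [← lie_skew]; exact Z.neg_mem (hxy e' f)
    · rw [hyy]; exact Z.zero_mem
    · rw [hz]; exact Z.zero_mem
    · rw [← lie_skew, hz]; simpa using Z.zero_mem
    · rw [← lie_skew, hz]; simpa using Z.zero_mem
    · rw [hz]; exact Z.zero_mem
  have h1 : ∀ u (w : L), ⁅b u, w⁆ ∈ Z := fun u w =>
    hbasis_to_all Z (LieAlgebra.ad k L (b u)) (fun u' => hbb u u') w
  have hrange_le : LinearMap.range ((LieAlgebra.ad k L v) : L →ₗ[k] L) ≤ Z := by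
    rintro _ ⟨w, rfl⟩
    refine hbasis_to_all Z (LieAlgebra.ad k L v) (fun u => ?_) w
    show ⁅v, b u⁆ ∈ Z
    rw [← lie_skew]
    exact Z.neg_mem (h1 u v)
  have hzle : Z ≤ LinearMap.range ((LieAlgebra.ad k L v) : L →ₗ[k] L) := by
    rw [hZ, Submodule.span_le]
    rintro _ ⟨i, rfl⟩
    -- find a maximizer ê of e.val i over the x-support of v
    set S : Finset {e : Fin n → ℕ // ∑ i, e i = m - 1} :=
      (b.repr v).support.preimage Sum.inl (Sum.inl_injective.injOn) with hS
    have hmemS : ∀ e, e ∈ S ↔ b.repr v (Sum.inl e) ≠ 0 := by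
      intro e; simp [hS, Finsupp.mem_support_iff]
    have hSne : S.Nonempty := by
      obtain ⟨e, he⟩ := hv
      exact ⟨e, (hmemS e).2 he⟩
    obtain ⟨eh, ehS, ehmax⟩ := S.exists_max_image (fun e => e.val i) hSne
    have hane : b.repr v (Sum.inl eh) ≠ 0 := (hmemS eh).1 ehS
    have hsum : ∑ j, (eh.val j + if j = i then 1 else 0) = m := by
      rw [Finset.sum_add_distrib, eh.2]
      simp
      omega
    set fi : {f : Fin n → ℕ // ∑ i, f i = m} :=
      ⟨fun j => eh.val j + if j = i then 1 else 0, hsum⟩ with hfi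
    -- the bracket of a basis vector with y_{fi}
    have hbrk : ∀ u ∈ (b.repr v).support, u ≠ Sum.inl eh →
        ⁅b u, b (Sum.inr (Sum.inl fi))⁆ = 0 := by
      rintro (e | f | j) hu hne
      · apply hbr0
        rintro ⟨j, hj⟩
        by_cases hji : j = i
        · subst hji
          apply hne
          congr 1
          ext1; funext j'
          have := hj j'
          by_cases h' : j' = j <;> simp [hfi, h'] at this ⊢ <;> omega
        · have h1' : e.val i = eh.val i + 1 := by
            have := hj i
            simp [hfi, Ne.symm hji] at this
            omega
          have heS : e ∈ S := (hmemS e).2 (by simpa [Finsupp.mem_support_iff] using hu)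
          have : e.val i ≤ eh.val i := ehmax e heS
          omega
      · exact hyy f fi
      · rw [← lie_skew, hz]; simp
    -- key computation : ⁅v, y_{fi}⁆ = (b.repr v (inl ê)) • z i
    set ψ : L →ₗ[k] L :=
      { toFun := fun w => ⁅w, b (Sum.inr (Sum.inl fi))⁆,
        map_add' := fun a c => add_lie a c _,
        map_smul' := fun r a => smul_lie r a _ } with hψ
    have hkey : ⁅v, b (Sum.inr (Sum.inl fi))⁆ = (b.repr v (Sum.inl eh)) • z i := by
      have hv' : ψ v = (b.repr v).sum fun u c => c • ψ (b u) := by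
        conv_lhs => rw [← b.linearCombination_repr v]
        rw [Finsupp.linearCombination_apply, map_finsuppSum]
        simp [map_smul]
      have : ψ v = ⁅v, b (Sum.inr (Sum.inl fi))⁆ := rfl
      rw [← this, hv', Finsupp.sum,
        Finset.sum_eq_single_of_mem (Sum.inl eh)
          (Finsupp.mem_support_iff.2 hane)
          (fun u hu hne => by
            have : ψ (b u) = 0 := hbrk u hu hne
            rw [this, smul_zero])]
      have : ψ (b (Sum.inl eh)) = z i := hbr eh fi i (fun j => rfl)
      rw [this]
    -- conclude z i ∈ range (ad v)
    have hmem : ⁅v, b (Sum.inr (Sum.inl fi))⁆ ∈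
        LinearMap.range ((LieAlgebra.ad k L v) : L →ₗ[k] L) :=
      ⟨b (Sum.inr (Sum.inl fi)), rfl⟩
    have : z i = (b.repr v (Sum.inl eh))⁻¹ • ⁅v, b (Sum.inr (Sum.inl fi))⁆ := by
      rw [hkey, smul_smul, inv_mul_cancel₀ hane, one_smul]
    rw [this]
    exact Submodule.smul_mem _ _ hmem
  have hrange_eq : LinearMap.range ((LieAlgebra.ad k L v) : L →ₗ[k] L) = Z :=
    le_antisymm hrange_le hzle
  rw [hrange_eq, hZ]
  have hli : LinearIndependent k z :=
    b.linearIndependent.comp _ (fun i j hij => by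
      simpa using (Sum.inr_injective (Sum.inr_injective hij) : i = j))
  rw [finrank_span_eq_card hli, Fintype.card_fin]
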